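/- For n ≥ 2, the transitive tournament T_n on vertices {0,1,...,n−1} with edges i → j iff i < j is congruence n-permutable but not congruence (n−1)-permutable. -/
import Mathlib


/-- A digraph is congruence `n`-permutable if it has a chain of ternary polymorphisms
witnessing `n`-permutability. (For `n = 1` this forces the digraph to have at most
one vertex.) -/
def IsNPermutable {V : Type*} (E : V → V → Prop) (n : ℕ) : Prop :=
  ∃ p : Fin (n + 1) → V → V → V → V,
    (∀ i, ∀ a₁ a₂ a₃ b₁ b₂ b₃, E a₁ b₁ → E a₂ b₂ → E a₃ b₃ →
      E (p i a₁ a₂ a₃) (p i b₁ b₂ b₃)) ∧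
    (∀ x y z, p 0 x y z = x) ∧
    (∀ i : Fin n, ∀ x y, p i.castSucc x x y = p i.succ x y y) ∧
    (∀ x y z, p (Fin.last n) x y z = z)

/-- The interpolating binary functions. -/
def gfun (n i x y : ℕ) : ℕ :=
  if x ≤ y then max x (min y (x + y + i - n)) else min x (max y (x + y + 1 - i))

lemma g_one (n x y : ℕ) (hx : x < n) (hy : y < n) : gfun n 1 x y = x := by
  unfold gfun; split_ifs <;> omega

lemma g_last (n x y : ℕ) (hx : x < n) (hy : y < n) : gfun n n x y = y := by
  unfold gfun; split_ifs <;> omega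

lemma g_lb (n i x y : ℕ) : min x y ≤ gfun n i x y := by
  unfold gfun; split_ifs <;> omega

lemma g_ub (n i x y : ℕ) : gfun n i x y ≤ max x y := by
  unfold gfun; split_ifs <;> omega

lemma g_diag (n i x : ℕ) : gfun n i x x = x := by
  unfold gfun; split_ifs <;> omega

lemma I1 (n i x y a b : ℕ) (ha : a < x) (hb : b < y) (hx : x < n) (hy : y < n) :
    gfun n i a b + min (x - a) (y - b) ≤ gfun n i x y := by
  unfold gfun; split_ifs <;> omega

lemma I2 (n i x y a b : ℕ) (hi : 1 ≤ i) (hin : i + 1 ≤ n)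
    (ha : a < x) (ha' : a < y) (hb : b < y) (hx : x < n) (hy : y < n) :
    gfun n (i+1) a b + min (x - a) (min (y - a) (y - b)) ≤ gfun n i x y := by
  unfold gfun; split_ifs <;> omega

lemma I3 (n i x y a b : ℕ) (hi : 1 ≤ i) (hin : i + 1 ≤ n)
    (ha : a < x) (hb : b < x) (hb' : b < y) (hx : x < n) (hy : y < n) :
    gfun n i a b + min (x - a) (min (x - b) (y - b)) ≤ gfun n (i+1) x y := by
  unfold gfun; split_ifs <;> omega

/-- The ternary polymorphisms (for middle indices), defined as the minimal
strictly-monotone extension of the forced diagonal values. -/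
def Pfun (n i x y z : ℕ) : ℕ :=
  max (min x (min y z)) <|
  max (if y = z then gfun n i x y else 0) <|
  max (if x = y then gfun n (i+1) x z else 0) <|
  (Finset.range n ×ˢ Finset.range n).sup (fun ab =>
    max (if ab.1 < x ∧ ab.2 < y ∧ ab.2 < z then
           gfun n i ab.1 ab.2 + min (x - ab.1) (min (y - ab.2) (z - ab.2)) else 0)
        (if ab.1 < x ∧ ab.1 < y ∧ ab.2 < z then
           gfun n (i+1) ab.1 ab.2 + min (x - ab.1) (min (y - ab.1) (z - ab.2)) else 0))

lemma P_ub (n i x y z : ℕ) (hx : x < n) (hy : y < n) (hz : z < n) : Pfun n i x y z < n := by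
  unfold Pfun
  have h0 : 0 < n := by omega
  refine max_lt (by omega) (max_lt ?_ (max_lt ?_ ?_))
  · split_ifs with h
    · have := g_ub n i x y; omega
    · omega
  · split_ifs with h
    · have := g_ub n (i+1) x z; omega
    · omega
  · rw [Finset.sup_lt_iff h0]
    rintro ⟨a, b⟩ hab
    refine max_lt ?_ ?_ <;> split_ifs with h
    · have := g_ub n i a b; simp only at *; omega
    · omega
    · have := g_ub n (i+1) a b; simp only at *; omega
    · omega

lemma hmem_prod (n a b : ℕ) (ha : a < n) (hb : b < n) :
    (a, b) ∈ Finset.range n ×ˢ Finset.range n := by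
  simp [Finset.mem_product, ha, hb]

lemma P_strict (n i x y z x' y' z' : ℕ) (h1 : x < x') (h2 : y < y') (h3 : z < z')
    (hx : x' < n) (hy : y' < n) (hz : z' < n) :
    Pfun n i x y z < Pfun n i x' y' z' := by
  unfold Pfun
  have hpos : (0:ℕ) < min x' (min y' z') := by omega
  refine max_lt (lt_of_lt_of_le (by omega) (le_max_left _ _)) (max_lt ?_ (max_lt ?_ ?_))
  · by_cases hyz : y = z
    · subst hyz
      have hc : x < x' ∧ y < y' ∧ y < z' := by omega
      refine lt_of_lt_of_le ?_ (le_max_of_le_right (le_max_of_le_right (le_max_of_le_right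
        (Finset.le_sup (hmem_prod n x y (by omega) (by omega))))))
      refine lt_of_lt_of_le ?_ (le_max_left _ _)
      dsimp only
      split_ifs <;> omega
    · rw [if_neg hyz]
      exact lt_of_lt_of_le hpos (le_max_left _ _)
  · by_cases hxy : x = y
    · subst hxy
      have hc : x < x' ∧ x < y' ∧ z < z' := by omega
      refine lt_of_lt_of_le ?_ (le_max_of_le_right (le_max_of_le_right (le_max_of_le_right
        (Finset.le_sup (hmem_prod n x z (by omega) (by omega))))))
      refine lt_of_lt_of_le ?_ (le_max_right _ _)
      dsimp only
      split_ifs <;> omega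
    · rw [if_neg hxy]
      exact lt_of_lt_of_le hpos (le_max_left _ _)
  · rw [Finset.sup_lt_iff (lt_of_lt_of_le hpos (le_max_left _ _))]
    rintro ⟨a, b⟩ hab
    dsimp only
    rw [Finset.mem_product, Finset.mem_range, Finset.mem_range] at hab
    refine max_lt ?_ ?_
    · by_cases hc : a < x ∧ b < y ∧ b < z
      · have hc' : a < x' ∧ b < y' ∧ b < z' := by omega
        refine lt_of_lt_of_le ?_ (le_max_of_le_right (le_max_of_le_right (le_max_of_le_right
          (Finset.le_sup (hmem_prod n a b hab.1 hab.2)))))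
        refine lt_of_lt_of_le ?_ (le_max_left _ _)
        dsimp only
        split_ifs <;> omega
      · rw [if_neg hc]
        exact lt_of_lt_of_le hpos (le_max_left _ _)
    · by_cases hc : a < x ∧ a < y ∧ b < z
      · have hc' : a < x' ∧ a < y' ∧ b < z' := by omega
        refine lt_of_lt_of_le ?_ (le_max_of_le_right (le_max_of_le_right (le_max_of_le_right
          (Finset.le_sup (hmem_prod n a b hab.1 hab.2)))))
        refine lt_of_lt_of_le ?_ (le_max_right _ _)
        dsimp only
        split_ifs <;> omega
      · rw [if_neg hc]
        exact lt_of_lt_of_le hpos (le_max_left _ _)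

lemma P_diag1 (n i x y : ℕ) (hi : 1 ≤ i) (hin : i + 1 ≤ n) (hx : x < n) (hy : y < n) :
    Pfun n i x y y = gfun n i x y := by
  unfold Pfun
  refine le_antisymm (max_le ?_ (max_le ?_ (max_le ?_ ?_))) ?_
  · have := g_lb n i x y; omega
  · rw [if_pos rfl]
  · split_ifs with h
    · subst h; rw [g_diag, g_diag]
    · exact Nat.zero_le _
  · refine Finset.sup_le ?_
    rintro ⟨a, b⟩ hab
    dsimp only
    refine max_le ?_ ?_
    · split_ifs with h
      · have := I1 n i x y a b h.1 h.2.1 hx hy; omega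
      · exact Nat.zero_le _
    · split_ifs with h
      · have := I2 n i x y a b hi hin h.1 h.2.1 h.2.2 hx hy; omega
      · exact Nat.zero_le _
  · refine le_trans ?_ (le_max_of_le_right (le_max_left _ _))
    rw [if_pos rfl]

lemma P_diag2 (n i x y : ℕ) (hi : 1 ≤ i) (hin : i + 1 ≤ n) (hx : x < n) (hy : y < n) :
    Pfun n i x x y = gfun n (i+1) x y := by
  unfold Pfun
  refine le_antisymm (max_le ?_ (max_le ?_ (max_le ?_ ?_))) ?_
  · have := g_lb n (i+1) x y; omega
  · split_ifs with h
    · subst h; rw [g_diag, g_diag]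
    · exact Nat.zero_le _
  · rw [if_pos rfl]
  · refine Finset.sup_le ?_
    rintro ⟨a, b⟩ hab
    dsimp only
    refine max_le ?_ ?_
    · split_ifs with h
      · have := I3 n i x y a b hi hin h.1 h.2.1 h.2.2 hx hy; omega
      · exact Nat.zero_le _
    · split_ifs with h
      · have := I1 n (i+1) x y a b h.1 h.2.2 hx hy; omega
      · exact Nat.zero_le _
  · refine le_trans ?_ (le_max_of_le_right (le_max_of_le_right (le_max_left _ _)))
    rw [if_pos rfl]

set_option maxHeartbeats 1000000 in
/-- For `n ≥ 2` the transitive tournament `T_n` is congruence `n`-permutable but not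
congruence `(n-1)`-permutable. -/
theorem stmt_14 (n : ℕ) (hn : 2 ≤ n) :
    IsNPermutable (fun i j : Fin n => i < j) n ∧
    ¬ IsNPermutable (fun i j : Fin n => i < j) (n - 1) := by
  have hn0 : 0 < n := by omega
  constructor
  · refine ⟨fun i x y z =>
      if i.val = 0 then x else if i.val = n then z
      else ⟨Pfun n i.val x.val y.val z.val, P_ub n i.val x.val y.val z.val x.isLt y.isLt z.isLt⟩,
      ?_, ?_, ?_, ?_⟩
    · intro i a₁ a₂ a₃ b₁ b₂ b₃ h1 h2 h3
      dsimp only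
      by_cases h0 : i.val = 0
      · rw [if_pos h0, if_pos h0]; exact h1
      · by_cases hNe : i.val = n
        · rw [if_neg h0, if_pos hNe, if_neg h0, if_pos hNe]; exact h3
        · rw [if_neg h0, if_neg hNe, if_neg h0, if_neg hNe]
          rw [Fin.lt_def]
          exact P_strict n i.val _ _ _ _ _ _ (Fin.lt_def.mp h1) (Fin.lt_def.mp h2)
            (Fin.lt_def.mp h3) b₁.isLt b₂.isLt b₃.isLt
    · intro x y z; simp
    · intro i x y
      dsimp only
      have hc : (i.castSucc).val = i.val := by simp
      have hs : (i.succ).val = i.val + 1 := by simp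
      have hilt : i.val < n := i.isLt
      by_cases h0 : i.val = 0
      · have e1 : (i.castSucc).val = 0 := by omega
        have e2 : ¬((i.succ).val = 0) := by omega
        have e3 : ¬((i.succ).val = n) := by omega
        rw [if_pos e1, if_neg e2, if_neg e3]
        have e4 : (i.succ).val = 1 := by omega
        refine (Fin.ext ?_).symm
        show Pfun n (i.succ).val x.val y.val y.val = x.val
        rw [e4, P_diag1 n 1 x.val y.val le_rfl (by omega) x.isLt y.isLt]
        exact g_one n x.val y.val x.isLt y.isLt
      · have e1 : ¬((i.castSucc).val = 0) := by omega
        have e2 : ¬((i.castSucc).val = n) := by omega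
        have e5 : ¬((i.succ).val = 0) := by omega
        by_cases hlast : i.val + 1 = n
        · have e3 : (i.succ).val = n := by omega
          rw [if_neg e1, if_neg e2, if_neg e5, if_pos e3]
          refine Fin.ext ?_
          show Pfun n (i.castSucc).val x.val x.val y.val = y.val
          rw [hc, P_diag2 n i.val x.val y.val (by omega) (by omega) x.isLt y.isLt, hlast]
          exact g_last n x.val y.val x.isLt y.isLt
        · have e3 : ¬((i.succ).val = n) := by omega
          rw [if_neg e1, if_neg e2, if_neg e5, if_neg e3]
          refine Fin.ext ?_
          show Pfun n (i.castSucc).val x.val x.val y.val = Pfun n (i.succ).val x.val y.val y.val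
          rw [hc, hs, P_diag2 n i.val x.val y.val (by omega) (by omega) x.isLt y.isLt,
            P_diag1 n (i.val + 1) x.val y.val (by omega) (by omega) x.isLt y.isLt]
    · intro x y z
      have : (Fin.last n).val = n := rfl
      simp [this, hn0.ne']
  · rintro ⟨p, hpoly, h0, hchain, hlast⟩
    have hm : n - 1 + 1 = n := by omega
    -- key : G_k = p_{(n-1)-k}(k, k+1, k+1) has value ≥ k+1
    have key : ∀ k, k + 1 ≤ n - 1 → ∀ (hi : n - 1 - k < n - 1 + 1) (h2 : k < n) (h3 : k + 1 < n),
        k + 1 ≤ (p ⟨n - 1 - k, hi⟩ ⟨k, h2⟩ ⟨k + 1, h3⟩ ⟨k + 1, h3⟩).val := by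
      intro k
      induction k with
      | zero =>
        intro _ hi h2 h3
        have he : (⟨n - 1 - 0, hi⟩ : Fin (n - 1 + 1)) = Fin.last (n - 1) := Fin.ext (by simp)
        rw [he, hlast]
      | succ k ih =>
        intro hk hi h2 h3
        have hklt : k + 2 ≤ n - 1 := hk
        have pA : n - 2 - k < n - 1 := by omega
        have pB : n - 2 - k < n - 1 + 1 := by omega
        have pC : n - 1 - k < n - 1 + 1 := by omega
        have pk : k < n := by omega
        have pk1 : k + 1 < n := by omega
        have pk2 : k + 2 < n := by omega
        have hch := hchain ⟨n - 2 - k, pA⟩ ⟨k, pk⟩ ⟨k + 1, pk1⟩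
        have hcs : (⟨n - 2 - k, pA⟩ : Fin (n - 1)).castSucc = ⟨n - 2 - k, pB⟩ := rfl
        have hsc : (⟨n - 2 - k, pA⟩ : Fin (n - 1)).succ = ⟨n - 1 - k, pC⟩ :=
          Fin.ext (by simp; omega)
        rw [hcs, hsc] at hch
        have hedge : ∀ (a b : ℕ) (ha : a < n) (hb : b < n), a < b →
            (⟨a, ha⟩ : Fin n) < ⟨b, hb⟩ := fun a b ha hb h => Fin.mk_lt_mk.mpr h
        have hstep := hpoly ⟨n - 2 - k, pB⟩ ⟨k, pk⟩ ⟨k, pk⟩ ⟨k + 1, pk1⟩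
          ⟨k + 1, pk1⟩ ⟨k + 2, pk2⟩ ⟨k + 2, pk2⟩
          (hedge _ _ _ _ (by omega)) (hedge _ _ _ _ (by omega)) (hedge _ _ _ _ (by omega))
        rw [hch] at hstep
        have ihv := ih (by omega) pC pk pk1
        have hlt := Fin.lt_def.mp hstep
        have hgi : (⟨n - 1 - (k + 1), hi⟩ : Fin (n - 1 + 1)) = ⟨n - 2 - k, pB⟩ :=
          Fin.ext (by simp; omega)
        have hgv : (⟨k + 1 + 1, h3⟩ : Fin n) = ⟨k + 2, pk2⟩ := rfl
        have hgv2 : (⟨k + 1, h2⟩ : Fin n) = ⟨k + 1, pk1⟩ := rfl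
        rw [hgi, hgv, hgv2]
        omega
    -- now contradict with chain identity at i = 0
    have q1 : (0:ℕ) < n - 1 := by omega
    have q2 : n - 2 < n := by omega
    have q3 : n - 1 < n := by omega
    have q4 : 1 < n - 1 + 1 := by omega
    have q5 : n - 1 - (n - 2) < n - 1 + 1 := by omega
    have q6 : n - 2 + 1 < n := by omega
    have hfin := key (n - 2) (by omega) q5 q2 q6
    have hch0 := hchain ⟨0, q1⟩ ⟨n - 2, q2⟩ ⟨n - 1, q3⟩
    have hcs0 : (⟨0, q1⟩ : Fin (n - 1)).castSucc = (0 : Fin (n - 1 + 1)) := Fin.ext (by simp)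
    have hsc0 : (⟨0, q1⟩ : Fin (n - 1)).succ = ⟨1, q4⟩ := Fin.ext (by simp)
    rw [hcs0, hsc0, h0] at hch0
    have he1 : (⟨n - 1 - (n - 2), q5⟩ : Fin (n - 1 + 1)) = ⟨1, q4⟩ := Fin.ext (by simp; omega)
    have he2 : (⟨n - 2 + 1, q6⟩ : Fin n) = ⟨n - 1, q3⟩ := Fin.ext (by simp; omega)
    rw [he1, he2] at hfin
    have hval := congrArg Fin.val hch0
    simp only at hval
    omega
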